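/- Let G = (V,E) be a finite connected simple graph. A function δ : V → ℕ is the outdegree function of some orientation of G if and only if exc_δ(V) = 0 (equivalently Σ_{v∈V} δ(v) = |E|) and exc_δ(U) ≥ 0 for every subset U ⊆ V. -/

import Mathlib

/-- An orientation of a simple graph: a choice of direction for each edge. -/
structure GraphOrientation {V : Type*} (G : SimpleGraph V) where
  dir : V → V → Prop
  adj_of_dir : ∀ u v, dir u v → G.Adj u v
  dir_iff_not : ∀ u v, G.Adj u v → (dir u v ↔ ¬ dir v u)

namespace GraphOrientation

variable {V : Type*} {G : SimpleGraph V}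

/-- The outdegree of a vertex: the number of edges directed away from it. -/
noncomputable def outDegree (O : GraphOrientation G) (v : V) : ℕ :=
  {u | O.dir v u}.ncard

/-- `v` is reachable from `u` by a directed path. -/
def Reaches (O : GraphOrientation G) : V → V → Prop :=
  Relation.ReflTransGen O.dir

/-- `C` is the edge set of a directed cycle of the orientation. -/
def IsDirCycle (O : GraphOrientation G) (C : Set (Sym2 V)) : Prop :=
  ∃ (v : V) (w : G.Walk v v), w.IsCycle ∧
    (∀ d ∈ w.darts, O.dir d.toProd.1 d.toProd.2) ∧ C = {e | e ∈ w.edges}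

/-- The orientation is strongly connected. -/
def IsStronglyConnected (O : GraphOrientation G) : Prop := ∀ u v, O.Reaches u v

/-- Every vertex is reachable from `v0`. -/
def IsConnectedFrom (O : GraphOrientation G) (v0 : V) : Prop := ∀ v, O.Reaches v0 v

/-- The set of edges on which two orientations differ. -/
def diffSet (O O' : GraphOrientation G) : Set (Sym2 V) :=
  {e | ∃ a b, e = s(a, b) ∧ O.dir a b ∧ O'.dir b a}

/-- `O'` is obtained from `O` by reversing exactly the edges of `A`. -/
def IsFlipOn (O O' : GraphOrientation G) (A : Set (Sym2 V)) : Prop :=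
  (∀ u v, s(u, v) ∈ A → (O'.dir u v ↔ O.dir v u)) ∧
    (∀ u v, s(u, v) ∉ A → (O'.dir u v ↔ O.dir u v))

/-- One cycle-flip step. -/
def CycleFlip (O O' : GraphOrientation G) : Prop :=
  ∃ C, O.IsDirCycle C ∧ O.IsFlipOn O' C

end GraphOrientation

/-- The cut defined by a vertex subset `U`: edges with exactly one endpoint in `U`. -/
def SimpleGraph.cutSet {V : Type*} (G : SimpleGraph V) (U : Set V) : Set (Sym2 V) :=
  {e | ∃ a b, e = s(a, b) ∧ G.Adj a b ∧ a ∈ U ∧ b ∉ U}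

/-- A cocycle: a minimal nonempty cut. -/
def SimpleGraph.IsCocycle {V : Type*} (G : SimpleGraph V) (D : Set (Sym2 V)) : Prop :=
  D.Nonempty ∧ (∃ U : Set V, D = G.cutSet U) ∧
    ∀ D' : Set (Sym2 V), D'.Nonempty → (∃ U : Set V, D' = G.cutSet U) → D' ⊆ D → D' = D

/-- A directed cocycle: a cocycle all of whose edges are directed toward the same side. -/
def GraphOrientation.IsDirCocycle {V : Type*} {G : SimpleGraph V}
    (O : GraphOrientation G) (D : Set (Sym2 V)) : Prop :=
  G.IsCocycle D ∧ ∃ U : Set V, D = G.cutSet U ∧ ∀ a b, O.dir a b → s(a, b) ∈ D → b ∈ U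

/-- The excess of a subset of vertices with respect to `δ : V → ℕ`. -/
noncomputable def SimpleGraph.excess {V : Type*} (G : SimpleGraph V) (δ : V → ℕ)
    (U : Finset V) : ℤ :=
  (∑ u ∈ U, (δ u : ℤ)) - ({e | e ∈ G.edgeSet ∧ ∀ x ∈ e, x ∈ U} : Set (Sym2 V)).ncard

/-- `C` is the edge set of a cycle of `G`. -/
def SimpleGraph.IsCycleEdgeSet {V : Type*} (G : SimpleGraph V) (C : Set (Sym2 V)) : Prop :=
  ∃ (v : V) (w : G.Walk v v), w.IsCycle ∧ C = {e | e ∈ w.edges}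

/-- The number of connected components of the spanning subgraph `(V, S)`. -/
noncomputable def numComponents (V : Type*) (S : Set (Sym2 V)) : ℕ :=
  Nat.card (SimpleGraph.fromEdgeSet S).ConnectedComponent

open Finset in
theorem statement1 {V : Type*} [Fintype V] (G : SimpleGraph V) (hG : G.Connected)
    (δ : V → ℕ) :
    (∃ O : GraphOrientation G, O.outDegree = δ) ↔
      (G.excess δ Finset.univ = 0 ∧ ∀ U : Finset V, 0 ≤ G.excess δ U) := by
  classical
  -- the number of edges inside `U`, as a Finset count
  have hcount : ∀ U : Finset V,
      ({e | e ∈ G.edgeSet ∧ ∀ x ∈ e, x ∈ U} : Set (Sym2 V)).ncard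
        = (G.edgeFinset.filter (fun e => ∀ x ∈ e, x ∈ U)).card := by
    intro U
    rw [show ({e | e ∈ G.edgeSet ∧ ∀ x ∈ e, x ∈ U} : Set (Sym2 V))
        = ↑(G.edgeFinset.filter (fun e => ∀ x ∈ e, x ∈ U)) by
      ext e; simp [SimpleGraph.mem_edgeFinset]]
    exact Set.ncard_coe_finset _
  have hfull : (G.edgeFinset.filter (fun e => ∀ x ∈ e, x ∈ (univ : Finset V))) =
      G.edgeFinset := by
    apply Finset.filter_true_of_mem; intro e _; intro x _; exact mem_univ x
  constructor
  · rintro ⟨O, rfl⟩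
    have hone : ∀ a b, O.dir a b → ¬ O.dir b a := fun a b h =>
      (O.dir_iff_not a b (O.adj_of_dir a b h)).1 h
    have hor : ∀ a b, G.Adj a b → O.dir a b ∨ O.dir b a := by
      intro a b h
      by_cases hd : O.dir a b
      · exact Or.inl hd
      · exact Or.inr ((O.dir_iff_not b a h.symm).2 hd)
    have hod : ∀ u, O.outDegree u = (univ.filter (fun w => O.dir u w)).card := by
      intro u
      simp [GraphOrientation.outDegree, Set.ncard_eq_toFinset_card', Set.toFinset_setOf]
    have hsum : ∀ U : Finset V, ∑ u ∈ U, O.outDegree u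
        = (U.sigma (fun u => univ.filter (fun w => O.dir u w))).card := by
      intro U; rw [Finset.card_sigma]
      exact Finset.sum_congr rfl fun u _ => hod u
    -- the key inequality: edges inside U ≤ sum of outdegrees over U
    have hle : ∀ U : Finset V, (G.edgeFinset.filter (fun e => ∀ x ∈ e, x ∈ U)).card
        ≤ (U.sigma (fun u => univ.filter (fun w => O.dir u w))).card := by
      intro U
      refine le_trans (Finset.card_le_card ?_)
        (Finset.card_image_le (f := fun p : Σ _ : V, V => s(p.1, p.2)))
      intro e he
      simp only [Finset.mem_filter, SimpleGraph.mem_edgeFinset] at he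
      obtain ⟨he1, he2⟩ := he
      induction e using Sym2.ind with
      | _ a b =>
        have hadj : G.Adj a b := he1
        have haU : a ∈ U := he2 a (Sym2.mem_mk_left a b)
        have hbU : b ∈ U := he2 b (Sym2.mem_mk_right a b)
        rcases hor a b hadj with hd | hd
        · exact Finset.mem_image.2 ⟨⟨a, b⟩, by simp [Finset.mem_sigma, haU, hd], rfl⟩
        · exact Finset.mem_image.2 ⟨⟨b, a⟩, by simp [Finset.mem_sigma, hbU, hd],
            Sym2.eq_swap⟩
    -- reverse inequality for U = univ
    have hge : ((univ : Finset V).sigma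
        (fun u => univ.filter (fun w => O.dir u w))).card ≤ G.edgeFinset.card := by
      apply Finset.card_le_card_of_injOn (fun p : Σ _ : V, V => s(p.1, p.2))
      · intro p hp
        simp only [Finset.coe_sigma, Set.mem_sigma_iff, Finset.coe_filter, Set.mem_setOf_eq] at hp
        exact SimpleGraph.mem_edgeFinset.2 (O.adj_of_dir _ _ hp.2.2)
      · intro p hp q hq hpq
        simp only [Finset.coe_sigma, Set.mem_sigma_iff, Finset.coe_filter,
          Set.mem_setOf_eq] at hp hq
        have hdp : O.dir p.1 p.2 := by
          simpa using hp.2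
        have hdq : O.dir q.1 q.2 := by
          simpa using hq.2
        rcases Sym2.eq_iff.1 hpq with ⟨h1, h2⟩ | ⟨h1, h2⟩
        · exact Sigma.ext h1 (heq_of_eq h2)
        · exfalso
          exact hone _ _ hdp (by rw [← h2, ← h1] at hdq; exact hdq)
    constructor
    · unfold SimpleGraph.excess
      rw [hcount, hfull]
      have h1 := hle univ
      rw [hfull] at h1
      have h2 := hge
      have h3 : ∑ u : V, O.outDegree u = G.edgeFinset.card := by
        rw [hsum]; omega
      rw [← Nat.cast_sum, h3]
      simp
    · intro U
      unfold SimpleGraph.excess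
      rw [hcount]
      have h1 := hle U
      have h2 := hsum U
      have : (G.edgeFinset.filter (fun e => ∀ x ∈ e, x ∈ U)).card
          ≤ ∑ u ∈ U, O.outDegree u := by omega
      rw [← Nat.cast_sum]
      have := Nat.cast_le (α := ℤ) |>.2 this
      omega
  · rintro ⟨h0, hU⟩
    -- natural-number versions of the hypotheses
    have hUn : ∀ U : Finset V,
        (G.edgeFinset.filter (fun e => ∀ x ∈ e, x ∈ U)).card ≤ ∑ u ∈ U, δ u := by
      intro U
      have h := hU U
      unfold SimpleGraph.excess at h
      rw [hcount U, ← Nat.cast_sum] at h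
      have h' : (((G.edgeFinset.filter (fun e => ∀ x ∈ e, x ∈ U)).card : ℕ) : ℤ)
          ≤ ((∑ u ∈ U, δ u : ℕ) : ℤ) := by linarith
      exact_mod_cast h'
    have h0n : ∑ u : V, δ u = G.edgeFinset.card := by
      have h := h0
      unfold SimpleGraph.excess at h
      rw [hcount, hfull, ← Nat.cast_sum] at h
      have h' : ((∑ u : V, δ u : ℕ) : ℤ) = ((G.edgeFinset.card : ℕ) : ℤ) := by linarith
      exact_mod_cast h'
    -- Hall's theorem: assign each edge a "source" slot
    set t : ↥G.edgeFinset → Finset (Σ v : V, Fin (δ v)) :=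
      fun e => univ.filter (fun p => p.1 ∈ (e : Sym2 V)) with ht
    have hhall : ∀ S : Finset ↥G.edgeFinset, S.card ≤ (S.biUnion t).card := by
      intro S
      set U : Finset V := univ.filter (fun v => ∃ e ∈ S, v ∈ (e : Sym2 V)) with hUdef
      have hbi : S.biUnion t = U.sigma (fun v => univ) := by
        ext p
        simp [ht, hUdef, Finset.mem_sigma, Finset.mem_biUnion, and_comm]
      rw [hbi, Finset.card_sigma]
      simp only [Finset.card_univ, Fintype.card_fin]
      refine le_trans ?_ (hUn U)
      apply Finset.card_le_card_of_injOn (fun e : ↥G.edgeFinset => (e : Sym2 V))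
      · intro e he
        simp only [Finset.mem_coe, Finset.mem_filter]
        refine ⟨e.2, fun x hx => ?_⟩
        simp only [hUdef, Finset.mem_filter, Finset.mem_univ, true_and]
        exact ⟨e, he, hx⟩
      · intro e _ e' _ h
        exact Subtype.ext h
    obtain ⟨f, hfinj, hf⟩ := (Finset.all_card_le_biUnion_card_iff_exists_injective t).1 hhall
    have hfmem : ∀ e : ↥G.edgeFinset, (f e).1 ∈ (e : Sym2 V) := by
      intro e
      have := hf e
      simp only [ht, Finset.mem_filter] at this
      exact this.2
    -- the orientation
    set O : GraphOrientation G :=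
      { dir := fun u v => ∃ h : G.Adj u v,
          (f ⟨s(u,v), SimpleGraph.mem_edgeFinset.2 h⟩).1 = u
        adj_of_dir := fun u v h => h.1
        dir_iff_not := by
          intro u v h
          have hsw : (⟨s(v,u), SimpleGraph.mem_edgeFinset.2 h.symm⟩ : ↥G.edgeFinset)
              = ⟨s(u,v), SimpleGraph.mem_edgeFinset.2 h⟩ := Subtype.ext Sym2.eq_swap
          have hmem := hfmem ⟨s(u,v), SimpleGraph.mem_edgeFinset.2 h⟩
          rw [Sym2.mem_iff] at hmem
          constructor
          · rintro ⟨_, hu⟩ ⟨_, hv⟩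
            rw [hsw] at hv
            exact h.ne (hu.symm.trans hv)
          · intro hn
            refine ⟨h, ?_⟩
            rcases hmem with hm | hm
            · exact hm
            · exact absurd ⟨h.symm, by rw [hsw]; exact hm⟩ hn } with hO
    refine ⟨O, ?_⟩
    funext v
    -- outDegree v equals the size of the fiber of f over v
    have hout : O.outDegree v
        = (univ.filter (fun e : ↥G.edgeFinset => (f e).1 = v)).card := by
      have : O.outDegree v = (univ.filter (fun u => O.dir v u)).card := by
        simp [GraphOrientation.outDegree, Set.ncard_eq_toFinset_card', Set.toFinset_setOf]
      rw [this]
      apply Finset.card_bij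
        (fun u hu => (⟨s(v,u), SimpleGraph.mem_edgeFinset.2
          (O.adj_of_dir v u (Finset.mem_filter.1 hu).2)⟩ : ↥G.edgeFinset))
      · intro u hu
        obtain ⟨h, hfu⟩ := (Finset.mem_filter.1 hu).2
        simp only [Finset.mem_filter, Finset.mem_univ, true_and]
        exact hfu
      · intro a ha b hb hab
        have := congrArg (fun e : ↥G.edgeFinset => (e : Sym2 V)) hab
        simp only at this
        rcases Sym2.eq_iff.1 this with ⟨_, h2⟩ | ⟨h1, h2⟩
        · exact h2
        · rw [← h1, h2]
      · intro e he
        simp only [Finset.mem_filter, Finset.mem_univ, true_and] at he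
        have hv : v ∈ (e : Sym2 V) := he ▸ hfmem e
        obtain ⟨u, hu⟩ := Sym2.mem_iff_exists.1 hv
        have hadj : G.Adj v u := (G.mem_edgeSet).1
          (by rw [← hu]; exact SimpleGraph.mem_edgeFinset.1 e.2)
        have heq : (⟨s(v,u), SimpleGraph.mem_edgeFinset.2 hadj⟩ : ↥G.edgeFinset) = e :=
          Subtype.ext hu.symm
        refine ⟨u, ?_, heq⟩
        simp only [Finset.mem_filter, Finset.mem_univ, true_and]
        exact ⟨hadj, by rw [heq]; exact he⟩
    -- fiber sizes are at most δ v
    have hfib_le : ∀ w : V,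
        (univ.filter (fun e : ↥G.edgeFinset => (f e).1 = w)).card ≤ δ w := by
      intro w
      have := Finset.card_le_card_of_injOn
        (fun e : ↥G.edgeFinset => ((f e).2 : ℕ))
        (s := univ.filter (fun e : ↥G.edgeFinset => (f e).1 = w))
        (t := Finset.range (δ w)) ?_ ?_
      · simpa using this
      · intro e he
        simp only [Finset.coe_filter, Set.mem_setOf_eq, Finset.mem_univ, true_and] at he
        rw [Finset.mem_coe, Finset.mem_range, ← he]
        exact (f e).2.2
      · intro e he e' he' hval
        simp only [Finset.coe_filter, Set.mem_setOf_eq] at he he'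
        apply hfinj
        apply Sigma.ext (by rw [he.2, he'.2])
        rw [Fin.heq_ext_iff (by rw [he.2, he'.2])]
        exact hval
    -- fibers partition the edges
    have hpart : ∑ w : V,
        (univ.filter (fun e : ↥G.edgeFinset => (f e).1 = w)).card
          = G.edgeFinset.card := by
      rw [← Fintype.card_coe G.edgeFinset, ← Finset.card_univ (α := ↥G.edgeFinset)]
      exact (Finset.card_eq_sum_card_fiberwise (fun e _ => Finset.mem_univ (f e).1)).symm
    have : ∀ w : V,
        (univ.filter (fun e : ↥G.edgeFinset => (f e).1 = w)).card = δ w := by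
      have := (Finset.sum_eq_sum_iff_of_le (s := (univ : Finset V))
        (fun w _ => hfib_le w)).1 (by rw [hpart, h0n])
      intro w; exact this w (Finset.mem_univ w)
    rw [hout, this v]
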